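/- Let S be a nonempty finite set, P a row-stochastic matrix on S, π a probability vector on S, and suppose there exist C > 0 and ρ ∈ (0,1) such that Σ_{z' ∈ S} |P^k(z,z') − π(z')| ≤ C·ρ^k for all z ∈ S and k ≥ 0. Let Θ ⊆ ℝ^d, let F : Θ × S → ℝ^m, and suppose there exist a constant L ≥ 0 and a function g : S → ℝ such that ‖F(θ,z) − F(κ,z)‖ ≤ L·g(z)·‖θ − κ‖ for all θ, κ ∈ Θ and all z ∈ S. For θ ∈ Θ define F̂(θ,z) := Σ_{k=0}^∞ ( Σ_{z'} P^k(z,z') F(θ,z') − Σ_{z'} π(z') F(θ,z') ). Then for all θ, κ ∈ Θ and all z ∈ S: ‖F̂(θ,z) − F̂(κ,z)‖ ≤ (C/(1−ρ)) · L · ( max_{z' ∈ S} g(z') ) · ‖θ − κ‖. -/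

import Mathlib

open Matrix

/-- **Lipschitz estimate for the parametrized Poisson equation solution** (proof of Theorem 6).
If `F(·,z)` is `L g(z)`-Lipschitz on `Θ ⊆ ℝ^d` for each `z`, then under geometric ergodicity
`Σ_{z'} |P^k(z,z') − π(z')| ≤ C ρ^k` the parametrized solution
`F̂(θ,z) = Σ_{k≥0} (Σ_{z'} P^k(z,z') F(θ,z') − Σ_{z'} π(z') F(θ,z'))` satisfies
`‖F̂(θ,z) − F̂(κ,z)‖ ≤ (C/(1−ρ)) L (max_{z'} g(z')) ‖θ − κ‖` for `θ, κ ∈ Θ`. -/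
theorem stmt14 {S : Type*} [Fintype S] [DecidableEq S] [Nonempty S] (d m : ℕ)
    (P : Matrix S S ℝ) (hnn : ∀ z z', 0 ≤ P z z') (hrow : ∀ z, ∑ z', P z z' = 1)
    (π : S → ℝ) (hπnn : ∀ z, 0 ≤ π z) (hπ1 : ∑ z, π z = 1)
    (C : ℝ) (hC : 0 < C) (ρ : ℝ) (hρ0 : 0 < ρ) (hρ1 : ρ < 1)
    (herg : ∀ (z : S) (k : ℕ), ∑ z', |(P ^ k) z z' - π z'| ≤ C * ρ ^ k)
    (Θ : Set (Fin d → ℝ)) (F : (Fin d → ℝ) → S → Fin m → ℝ)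
    (L : ℝ) (hL : 0 ≤ L) (g : S → ℝ)
    (hlip : ∀ θ ∈ Θ, ∀ κ ∈ Θ, ∀ z : S, ‖F θ z - F κ z‖ ≤ L * g z * ‖θ - κ‖) :
    ∀ θ ∈ Θ, ∀ κ ∈ Θ, ∀ z : S,
      ‖(∑' k : ℕ, ((∑ z', (P ^ k) z z' • F θ z') - ∑ z', π z' • F θ z'))
        - ∑' k : ℕ, ((∑ z', (P ^ k) z z' • F κ z') - ∑ z', π z' • F κ z')‖ ≤
      C / (1 - ρ) * L * (Finset.univ.sup' Finset.univ_nonempty g) * ‖θ - κ‖ := by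
  intro θ hθ κ hκ z
  set M := Finset.univ.sup' Finset.univ_nonempty g with hM
  have key : ∀ (τ : Fin d → ℝ) (k : ℕ),
      ((∑ z', (P ^ k) z z' • F τ z') - ∑ z', π z' • F τ z')
      = ∑ z', ((P ^ k) z z' - π z') • F τ z' := by
    intro τ k
    rw [← Finset.sum_sub_distrib]
    simp [sub_smul]
  have habs : ∀ (k : ℕ) (z' : S), |(P ^ k) z z' - π z'| ≤ C * ρ ^ k := by
    intro k z'
    exact le_trans (Finset.single_le_sum (f := fun z' => |(P ^ k) z z' - π z'|)
      (fun i _ => abs_nonneg _) (Finset.mem_univ z')) (herg z k)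
  have hsum : ∀ τ : Fin d → ℝ,
      Summable (fun k : ℕ => ∑ z', ((P ^ k) z z' - π z') • F τ z') := by
    intro τ
    apply Summable.of_norm_bounded (g := fun k : ℕ => (C * ∑ z', ‖F τ z'‖) * ρ ^ k)
      ((summable_geometric_of_lt_one hρ0.le hρ1).mul_left _)
    intro k
    calc ‖∑ z', ((P ^ k) z z' - π z') • F τ z'‖
        ≤ ∑ z', ‖((P ^ k) z z' - π z') • F τ z'‖ := norm_sum_le _ _
      _ = ∑ z', |(P ^ k) z z' - π z'| * ‖F τ z'‖ := by
          simp [norm_smul, Real.norm_eq_abs]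
      _ ≤ ∑ z', (C * ρ ^ k) * ‖F τ z'‖ :=
          Finset.sum_le_sum (fun z' _ =>
            mul_le_mul_of_nonneg_right (habs k z') (norm_nonneg _))
      _ = (C * ∑ z', ‖F τ z'‖) * ρ ^ k := by
          rw [Finset.mul_sum, Finset.sum_mul]
          exact Finset.sum_congr rfl fun _ _ => by ring
  by_cases hθκ : θ = κ
  · subst hθκ; simp
  · have hD : 0 < ‖θ - κ‖ := by
      rw [norm_pos_iff]; exact sub_ne_zero.mpr hθκ
    have hLg : ∀ z' : S, 0 ≤ L * g z' := by
      intro z'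
      have h := (norm_nonneg (F θ z' - F κ z')).trans (hlip θ hθ κ hκ z')
      exact nonneg_of_mul_nonneg_right (mul_comm (L * g z') ‖θ - κ‖ ▸ h) hD
    have hgM : ∀ z' : S, g z' ≤ M := fun z' => Finset.le_sup' g (Finset.mem_univ z')
    have hLM : 0 ≤ L * M := by
      obtain ⟨z0⟩ := (inferInstance : Nonempty S)
      exact le_trans (hLg z0) (mul_le_mul_of_nonneg_left (hgM z0) hL)
    simp only [key]
    rw [← Summable.tsum_sub (hsum θ) (hsum κ)]
    have hdiff : ∀ k : ℕ,
        (∑ z', ((P ^ k) z z' - π z') • F θ z') - (∑ z', ((P ^ k) z z' - π z') • F κ z')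
        = ∑ z', ((P ^ k) z z' - π z') • (F θ z' - F κ z') := by
      intro k
      rw [← Finset.sum_sub_distrib]
      simp [smul_sub]
    simp only [hdiff]
    have hgeo : HasSum (fun k : ℕ => (C * (L * M * ‖θ - κ‖)) * ρ ^ k)
        (C * (L * M * ‖θ - κ‖) * (1 - ρ)⁻¹) := by
      simpa using (hasSum_geometric_of_lt_one hρ0.le hρ1).mul_left (C * (L * M * ‖θ - κ‖))
    have hbnd : ∀ k : ℕ,
        ‖∑ z', ((P ^ k) z z' - π z') • (F θ z' - F κ z')‖
        ≤ (C * (L * M * ‖θ - κ‖)) * ρ ^ k := by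
      intro k
      calc ‖∑ z', ((P ^ k) z z' - π z') • (F θ z' - F κ z')‖
          ≤ ∑ z', ‖((P ^ k) z z' - π z') • (F θ z' - F κ z')‖ := norm_sum_le _ _
        _ = ∑ z', |(P ^ k) z z' - π z'| * ‖F θ z' - F κ z'‖ := by
            simp [norm_smul, Real.norm_eq_abs]
        _ ≤ ∑ z', |(P ^ k) z z' - π z'| * (L * M * ‖θ - κ‖) := by
            apply Finset.sum_le_sum
            intro z' _
            apply mul_le_mul_of_nonneg_left _ (abs_nonneg _)
            calc ‖F θ z' - F κ z'‖ ≤ L * g z' * ‖θ - κ‖ := hlip θ hθ κ hκ z'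
              _ ≤ L * M * ‖θ - κ‖ :=
                mul_le_mul_of_nonneg_right
                  (mul_le_mul_of_nonneg_left (hgM z') hL) (norm_nonneg _)
        _ = (∑ z', |(P ^ k) z z' - π z'|) * (L * M * ‖θ - κ‖) := by
            rw [Finset.sum_mul]
        _ ≤ (C * ρ ^ k) * (L * M * ‖θ - κ‖) :=
            mul_le_mul_of_nonneg_right (herg z k) (mul_nonneg hLM (norm_nonneg _))
        _ = (C * (L * M * ‖θ - κ‖)) * ρ ^ k := by ring
    have := tsum_of_norm_bounded hgeo hbnd
    calc ‖∑' k : ℕ, ∑ z', ((P ^ k) z z' - π z') • (F θ z' - F κ z')‖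
        ≤ C * (L * M * ‖θ - κ‖) * (1 - ρ)⁻¹ := this
      _ = C / (1 - ρ) * L * M * ‖θ - κ‖ := by
          field_simp
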